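/- Under Assumptions Q1, A1-i and A1-ii: (a) for each a ∈ 𝒜 the function π ↦ h_{a*}[π] is lower semicontinuous on ℝ^𝒜; (b) h_{a*}[π] ≤ 0 for every a ∈ 𝒜 and π ∈ ℝ^𝒜; (c) h_{a*}[π] = 0 if and only if π_a = max_{b∈𝒜} π_b. -/

import Mathlib

open MeasureTheory Finset
open scoped Classical

/-- The maximal payoff among actions in `S`. -/
noncomputable def piStar {A : Type*} (π : A → ℝ) (S : Finset A) : ℝ :=
  if h : S.Nonempty then S.sup' h π else 0

/-- `Q(q) = μ_Q((-∞, q])`. -/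
noncomputable def Qfun (μQ : Measure ℝ) (q : ℝ) : ℝ := (μQ (Set.Iic q)).toReal

/-- The individual ex-ante first-order net gain `g_{a*}[π]`. -/
noncomputable def gain {A : Type*} [Fintype A] [DecidableEq A]
    (P : A → Finset A → ℝ) (μQ : Measure ℝ) (π : A → ℝ) (a : A) : ℝ :=
  ∑ A' ∈ (Finset.univ.erase a).powerset,
    P a A' * ∫ q, max (piStar π A' - π a - q) 0 ∂μQ

/-- `g_{**}[π](S) = min_{b ∈ S} g_{b*}[π]`. -/
noncomputable def gainMin {A : Type*} [Fintype A] [DecidableEq A]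
    (P : A → Finset A → ℝ) (μQ : Measure ℝ) (π : A → ℝ) (S : Finset A) : ℝ :=
  if h : S.Nonempty then S.inf' h (fun b => gain P μQ π b) else 0

/-- The individual ex-ante second-order net gain `h_{a*}[π]`. -/
noncomputable def gain2 {A : Type*} [Fintype A] [DecidableEq A]
    (P : A → Finset A → ℝ) (μQ : Measure ℝ) (π : A → ℝ) (a : A) : ℝ :=
  ∑ A' ∈ (Finset.univ.erase a).powerset,
    P a A' * Qfun μQ (piStar π A' - π a) * (gainMin P μQ π A' - gain P μQ π a)

/-! ### Auxiliary lemmas -/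

section Aux

variable {A : Type*} [Fintype A] [DecidableEq A]

/-- Under Q1, `μQ` is supported on `[0, ∞)`. -/
lemma aux_ae_nonneg (μQ : Measure ℝ) [IsProbabilityMeasure μQ]
    (hQ1a : ∀ q : ℝ, q < 0 → Qfun μQ q = 0) : ∀ᵐ q ∂μQ, 0 ≤ q := by
  have h1 : ∀ q : ℝ, q < 0 → μQ (Set.Iic q) = 0 := by
    intro q hq
    have h := hQ1a q hq
    rw [Qfun, ENNReal.toReal_eq_zero_iff] at h
    rcases h with h | h
    · exact h
    · exact absurd h (measure_ne_top _ _)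
  have h2 : μQ (Set.Iio 0) = 0 := by
    have hsub : Set.Iio (0:ℝ) ⊆ ⋃ n : ℕ, Set.Iic (-(1/(n+1) : ℝ)) := by
      intro q hq
      simp only [Set.mem_Iio] at hq
      obtain ⟨n, hn⟩ := exists_nat_one_div_lt (show (0:ℝ) < -q by linarith)
      exact Set.mem_iUnion.2 ⟨n, by simp only [Set.mem_Iic]; push_cast; linarith⟩
    refine le_antisymm ?_ zero_le
    refine le_trans (measure_mono hsub) (le_trans (measure_iUnion_le _) ?_)
    have : ∀ n : ℕ, μQ (Set.Iic (-(1/(n+1) : ℝ))) = 0 := by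
      intro n
      apply h1
      have : (0:ℝ) < 1/(n+1) := by positivity
      linarith
    simp only [one_div] at this
    simp [this]
  rw [ae_iff]
  convert h2 using 2
  ext q
  simp [Set.mem_Iio, not_le]

lemma aux_int (μQ : Measure ℝ) [IsProbabilityMeasure μQ]
    (hQ1a : ∀ q : ℝ, q < 0 → Qfun μQ q = 0) (x : ℝ) :
    Integrable (fun q => max (x - q) 0) μQ := by
  refine (integrable_const (max x 0)).mono' ?_ ?_
  · exact ((continuous_const.sub continuous_id).max continuous_const).aestronglyMeasurable
  · filter_upwards [aux_ae_nonneg μQ hQ1a] with q hq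
    rw [Real.norm_eq_abs, abs_of_nonneg (le_max_right _ _)]
    exact max_le_max (by linarith) le_rfl

/-- layer-cake identity for `max z 0`. -/
lemma aux_layer (z : ℝ) :
    ∫ s in Set.Ioi (0:ℝ), (Set.Iio z).indicator (fun _ => (1:ℝ)) s = max z 0 := by
  rw [MeasureTheory.setIntegral_indicator measurableSet_Iio]
  rw [MeasureTheory.setIntegral_const]
  rw [Set.Ioi_inter_Iio, measureReal_def, Real.volume_Ioo, smul_eq_mul, mul_one]
  rcases le_or_gt z 0 with h | h
  · rw [max_eq_right h, ENNReal.toReal_eq_zero_iff]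
    left
    rw [ENNReal.ofReal_eq_zero]
    linarith
  · rw [max_eq_left h.le, sub_zero, ENNReal.toReal_ofReal h.le]

lemma aux_ind_integrable (z : ℝ) :
    IntegrableOn (Set.indicator (Set.Iio z) (fun _ => (1:ℝ))) (Set.Ioi 0) volume := by
  rw [IntegrableOn, integrable_indicator_iff measurableSet_Iio]
  rw [IntegrableOn, integrable_const_iff]
  right
  rw [Measure.restrict_restrict measurableSet_Iio, Set.Iio_inter_Ioi]
  infer_instance

lemma gain_nonneg (P : A → Finset A → ℝ) (μQ : Measure ℝ)
    (hPnn : ∀ a A', 0 ≤ P a A') (π : A → ℝ) (c : A) : 0 ≤ gain P μQ π c := by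
  refine Finset.sum_nonneg fun A' _ => mul_nonneg (hPnn _ _) ?_
  exact integral_nonneg fun q => le_max_right _ _

/-- Monotonicity: a better action has a smaller first-order gain. -/
lemma gain_mono (P : A → Finset A → ℝ) (μQ : Measure ℝ) [IsProbabilityMeasure μQ]
    (hPnn : ∀ a A', 0 ≤ P a A')
    (hPempty : ∀ a, P a (∅ : Finset A) = 0)
    (hQ1a : ∀ q : ℝ, q < 0 → Qfun μQ q = 0)
    (hA1ii : ∀ a b : A, ∀ S : Finset A, S ⊆ Finset.univ \ {a, b} →
      ∑ A' ∈ (Finset.univ.erase a).powerset.filter (fun A' => (A' ∩ S).Nonempty), P a A'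
        = ∑ A' ∈ (Finset.univ.erase b).powerset.filter (fun A' => (A' ∩ S).Nonempty), P b A')
    (π : A → ℝ) (a b : A) (hab : π a ≤ π b) :
    gain P μQ π b ≤ gain P μQ π a := by
  classical
  -- pointwise (in the layer variable) comparison
  have claim1 : ∀ s : ℝ, 0 ≤ s →
      (∑ A' ∈ (Finset.univ.erase b).powerset,
        P b A' * (if s < piStar π A' - π b then (1:ℝ) else 0))
      ≤ ∑ A' ∈ (Finset.univ.erase a).powerset,
        P a A' * (if s < piStar π A' - π a then (1:ℝ) else 0) := by
    intro s hs
    set T : Finset A := Finset.univ.filter (fun c => π b + s < π c) with hT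
    have hTsub : T ⊆ Finset.univ \ ({a, b} : Finset A) := by
      intro c hc
      rw [hT, mem_filter] at hc
      rw [mem_sdiff]
      refine ⟨mem_univ _, ?_⟩
      simp only [mem_insert, mem_singleton]
      push_neg
      constructor
      · rintro rfl; linarith [hc.2]
      · rintro rfl; linarith [hc.2]
    have hiff_rev : ∀ c : A, π c ≤ π b → ∀ A' : Finset A, A'.Nonempty →
        (∃ d ∈ A', π b + s < π d) → s < piStar π A' - π c := by
      rintro c hc A' hA' ⟨d, hd, hds⟩
      rw [piStar, dif_pos hA']
      have := Finset.le_sup' π hd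
      linarith
    have hiff_b : ∀ A' : Finset A, A'.Nonempty →
        ((s < piStar π A' - π b) ↔ ∃ d ∈ A', π b + s < π d) := by
      intro A' hA'
      constructor
      · intro h
        rw [piStar, dif_pos hA'] at h
        obtain ⟨d, hd, hds⟩ := Finset.exists_mem_eq_sup' hA' π
        exact ⟨d, hd, by rw [← hds]; linarith⟩
      · exact hiff_rev b le_rfl A' hA'
    -- LHS = filtered sum for b
    have hL : (∑ A' ∈ (Finset.univ.erase b).powerset,
        P b A' * (if s < piStar π A' - π b then (1:ℝ) else 0))
        = ∑ A' ∈ (Finset.univ.erase b).powerset.filter (fun A' => (A' ∩ T).Nonempty),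
            P b A' := by
      rw [Finset.sum_filter]
      refine Finset.sum_congr rfl fun A' _ => ?_
      rcases A'.eq_empty_or_nonempty with rfl | hA'
      · simp [hPempty]
      · have hcond : (s < piStar π A' - π b) ↔ (A' ∩ T).Nonempty := by
          rw [hiff_b A' hA']
          constructor
          · rintro ⟨d, hd, hds⟩
            exact ⟨d, mem_inter.2 ⟨hd, by rw [hT, mem_filter]; exact ⟨mem_univ _, hds⟩⟩⟩
          · rintro ⟨d, hd⟩
            rw [mem_inter, hT, mem_filter] at hd
            exact ⟨d, hd.1, hd.2.2⟩
        by_cases h : (A' ∩ T).Nonempty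
        · rw [if_pos h, if_pos (hcond.2 h), mul_one]
        · rw [if_neg h, if_neg (fun hh => h (hcond.1 hh)), mul_zero]
    rw [hL, ← hA1ii a b T hTsub]
    -- filtered sum for a ≤ RHS
    rw [Finset.sum_filter]
    refine Finset.sum_le_sum fun A' _ => ?_
    by_cases h : (A' ∩ T).Nonempty
    · rw [if_pos h]
      obtain ⟨d, hd⟩ := h
      rw [mem_inter, hT, mem_filter] at hd
      have hA' : A'.Nonempty := ⟨d, hd.1⟩
      have : s < piStar π A' - π a :=
        hiff_rev a hab A' hA' ⟨d, hd.1, hd.2.2⟩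
      rw [if_pos this, mul_one]
    · rw [if_neg h]
      exact mul_nonneg (hPnn _ _) (by positivity)
  -- comparison after integrating out the layer variable, for each fixed q ≥ 0
  have claim2 : ∀ q : ℝ, 0 ≤ q →
      (∑ A' ∈ (Finset.univ.erase b).powerset,
        P b A' * max (piStar π A' - π b - q) 0)
      ≤ ∑ A' ∈ (Finset.univ.erase a).powerset,
        P a A' * max (piStar π A' - π a - q) 0 := by
    intro q hq
    have repr : ∀ c : A,
        (∑ A' ∈ (Finset.univ.erase c).powerset, P c A' * max (piStar π A' - π c - q) 0)
        = ∫ s in Set.Ioi (0:ℝ), ∑ A' ∈ (Finset.univ.erase c).powerset,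
            P c A' * (Set.Iio (piStar π A' - π c - q)).indicator (fun _ => (1:ℝ)) s := by
      intro c
      rw [integral_finset_sum _ (fun A' _ => (aux_ind_integrable _).const_mul _)]
      refine Finset.sum_congr rfl fun A' _ => ?_
      rw [integral_const_mul, aux_layer]
    rw [repr a, repr b]
    refine setIntegral_mono_on
      (integrable_finset_sum _ (fun A' _ => (aux_ind_integrable _).const_mul _))
      (integrable_finset_sum _ (fun A' _ => (aux_ind_integrable _).const_mul _))
      measurableSet_Ioi ?_
    intro s hs
    rw [Set.mem_Ioi] at hs
    have H := claim1 (q + s) (by linarith)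
    have hrw : ∀ c : A, ∀ A' : Finset A,
        (Set.Iio (piStar π A' - π c - q)).indicator (fun _ => (1:ℝ)) s
        = (if q + s < piStar π A' - π c then (1:ℝ) else 0) := by
      intro c A'
      rw [Set.indicator_apply]
      refine if_congr ?_ rfl rfl
      rw [Set.mem_Iio]
      constructor <;> intro <;> linarith
    simp only [hrw]
    exact H
  -- integrate over q
  have hgain : ∀ c : A, gain P μQ π c
      = ∫ q, (∑ A' ∈ (Finset.univ.erase c).powerset,
          P c A' * max (piStar π A' - π c - q) 0) ∂μQ := by
    intro c
    rw [integral_finset_sum _ (fun A' _ => (aux_int μQ hQ1a _).const_mul _)]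
    refine Finset.sum_congr rfl fun A' _ => ?_
    rw [integral_const_mul]
  rw [hgain a, hgain b]
  refine integral_mono_ae
    (integrable_finset_sum _ (fun A' _ => (aux_int μQ hQ1a _).const_mul _))
    (integrable_finset_sum _ (fun A' _ => (aux_int μQ hQ1a _).const_mul _)) ?_
  filter_upwards [aux_ae_nonneg μQ hQ1a] with q hq
  exact claim2 q hq

/-- If `a` is optimal then its first-order gain vanishes. -/
lemma gain_eq_zero (P : A → Finset A → ℝ) (μQ : Measure ℝ) [IsProbabilityMeasure μQ]
    (hPempty : ∀ a, P a (∅ : Finset A) = 0)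
    (hQ1a : ∀ q : ℝ, q < 0 → Qfun μQ q = 0)
    (π : A → ℝ) (a : A) (hmax : ∀ c : A, π c ≤ π a) :
    gain P μQ π a = 0 := by
  refine Finset.sum_eq_zero fun A' _ => ?_
  rcases A'.eq_empty_or_nonempty with rfl | hA'
  · simp [hPempty]
  · have hps : piStar π A' ≤ π a := by
      rw [piStar, dif_pos hA']
      exact Finset.sup'_le hA' π fun c _ => hmax c
    have hae : (fun q => max (piStar π A' - π a - q) 0) =ᵐ[μQ] fun _ => (0:ℝ) := by
      filter_upwards [aux_ae_nonneg μQ hQ1a] with q hq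
      rw [max_eq_right (by linarith)]
    rw [integral_congr_ae hae]
    simp

/-- If `a` is not optimal then its first-order gain is positive. -/
lemma gain_pos (P : A → Finset A → ℝ) (μQ : Measure ℝ) [IsProbabilityMeasure μQ]
    (hPnn : ∀ a A', 0 ≤ P a A')
    (hQ1a : ∀ q : ℝ, q < 0 → Qfun μQ q = 0)
    (hQ1b : ∀ q : ℝ, 0 < q → 0 < Qfun μQ q)
    (hA1i : ∀ a b : A, b ≠ a →
      0 < ∑ A' ∈ (Finset.univ.erase a).powerset.filter (fun A' => b ∈ A'), P a A')
    (π : A → ℝ) (a : A) (hlt : ∃ b : A, π a < π b) :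
    0 < gain P μQ π a := by
  obtain ⟨b, hb⟩ := hlt
  have hba : b ≠ a := fun h => absurd hb (by rw [h]; exact lt_irrefl _)
  obtain ⟨A₀, hA₀mem, hA₀pos⟩ : ∃ A₀ ∈ (Finset.univ.erase a).powerset.filter
      (fun A' => b ∈ A'), 0 < P a A₀ := by
    by_contra h
    push_neg at h
    have : (∑ A' ∈ (Finset.univ.erase a).powerset.filter (fun A' => b ∈ A'), P a A') ≤ 0 :=
      Finset.sum_nonpos fun A' hA' => h A' hA'
    linarith [hA1i a b hba]
  rw [mem_filter] at hA₀mem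
  have hbA₀ : b ∈ A₀ := hA₀mem.2
  have hA₀ne : A₀.Nonempty := ⟨b, hbA₀⟩
  -- the integral for A₀ is positive
  have hps : π a < piStar π A₀ := by
    rw [piStar, dif_pos hA₀ne]
    exact lt_of_lt_of_le hb (Finset.le_sup' π hbA₀)
  set x := piStar π A₀ - π a with hx
  have hxpos : 0 < x := by rw [hx]; linarith
  have hint : 0 < ∫ q, max (x - q) 0 ∂μQ := by
    have hlow : ∀ q : ℝ, (Set.Iic (x/2)).indicator (fun _ => x/2) q ≤ max (x - q) 0 := by
      intro q
      rw [Set.indicator_apply]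
      by_cases h : q ∈ Set.Iic (x/2)
      · rw [if_pos h]
        rw [Set.mem_Iic] at h
        exact le_max_of_le_left (by linarith)
      · rw [if_neg h]
        exact le_max_right _ _
    have h1 : (μQ (Set.Iic (x/2))).toReal * (x/2) ≤ ∫ q, max (x - q) 0 ∂μQ := by
      have := integral_mono ((integrable_const (x/2)).indicator measurableSet_Iic)
        (aux_int μQ hQ1a x) hlow
      rwa [integral_indicator_const _ measurableSet_Iic, smul_eq_mul] at this
    have h2 : 0 < (μQ (Set.Iic (x/2))).toReal * (x/2) :=
      mul_pos (hQ1b _ (by linarith)) (by linarith)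
    linarith
  calc (0:ℝ) < P a A₀ * ∫ q, max (piStar π A₀ - π a - q) 0 ∂μQ := mul_pos hA₀pos hint
    _ ≤ gain P μQ π a := by
        refine Finset.single_le_sum (f := fun A' =>
          P a A' * ∫ q, max (piStar π A' - π a - q) 0 ∂μQ) ?_ hA₀mem.1
        intro A' _
        exact mul_nonneg (hPnn _ _) (integral_nonneg fun q => le_max_right _ _)

/-- Each term of `gain2` is nonpositive. -/
lemma term_nonpos (P : A → Finset A → ℝ) (μQ : Measure ℝ) [IsProbabilityMeasure μQ]
    (hPnn : ∀ a A', 0 ≤ P a A')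
    (hPempty : ∀ a, P a (∅ : Finset A) = 0)
    (hQ1a : ∀ q : ℝ, q < 0 → Qfun μQ q = 0)
    (hA1ii : ∀ a b : A, ∀ S : Finset A, S ⊆ Finset.univ \ {a, b} →
      ∑ A' ∈ (Finset.univ.erase a).powerset.filter (fun A' => (A' ∩ S).Nonempty), P a A'
        = ∑ A' ∈ (Finset.univ.erase b).powerset.filter (fun A' => (A' ∩ S).Nonempty), P b A')
    (π : A → ℝ) (a : A) (A' : Finset A) :
    P a A' * Qfun μQ (piStar π A' - π a) * (gainMin P μQ π A' - gain P μQ π a) ≤ 0 := by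
  rcases A'.eq_empty_or_nonempty with rfl | hA'
  · simp [hPempty]
  · rcases lt_or_ge (piStar π A') (π a) with h | h
    · rw [hQ1a _ (by linarith), mul_zero, zero_mul]
    · have hsup : ∃ c ∈ A', piStar π A' = π c := by
        rw [piStar, dif_pos hA']
        obtain ⟨c, hc, hcs⟩ := Finset.exists_mem_eq_sup' hA' π
        exact ⟨c, hc, hcs⟩
      obtain ⟨c, hc, hcs⟩ := hsup
      have hgc : gain P μQ π c ≤ gain P μQ π a :=
        gain_mono P μQ hPnn hPempty hQ1a hA1ii π a c (by rw [hcs] at h; exact h)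
      have hgm : gainMin P μQ π A' ≤ gain P μQ π c := by
        rw [gainMin, dif_pos hA']
        exact Finset.inf'_le _ hc
      refine mul_nonpos_of_nonneg_of_nonpos ?_ (by linarith)
      exact mul_nonneg (hPnn _ _) ENNReal.toReal_nonneg

/-! ### Continuity facts -/

lemma cont_piStar (A' : Finset A) : Continuous fun π : A → ℝ => piStar π A' := by
  rcases A'.eq_empty_or_nonempty with rfl | hA'
  · simp only [piStar, dif_neg (Finset.not_nonempty_empty)]
    exact continuous_const
  · have heq : (fun π : A → ℝ => piStar π A')
        = fun π : A → ℝ => A'.sup' hA' (fun i => π i) := by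
      funext π
      rw [piStar, dif_pos hA']
    rw [heq]
    have : (fun π : A → ℝ => A'.sup' hA' (fun i => π i))
        = A'.sup' hA' (fun i => fun π : A → ℝ => π i) := by
      funext π
      rw [Finset.sup'_apply]
    rw [this]
    exact Continuous.finset_sup' hA' fun i _ => continuous_apply i

lemma cont_v (μQ : Measure ℝ) [IsProbabilityMeasure μQ]
    (hQ1a : ∀ q : ℝ, q < 0 → Qfun μQ q = 0) :
    Continuous fun x : ℝ => ∫ q, max (x - q) 0 ∂μQ := by
  have hlip : LipschitzWith 1 (fun x : ℝ => ∫ q, max (x - q) 0 ∂μQ) := by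
    refine LipschitzWith.of_dist_le_mul fun x y => ?_
    rw [NNReal.coe_one, one_mul, Real.dist_eq, Real.dist_eq]
    have hsub : (∫ q, max (x - q) 0 ∂μQ) - (∫ q, max (y - q) 0 ∂μQ)
        = ∫ q, (max (x - q) 0 - max (y - q) 0) ∂μQ :=
      (integral_sub (aux_int μQ hQ1a x) (aux_int μQ hQ1a y)).symm
    rw [hsub]
    calc |∫ q, (max (x - q) 0 - max (y - q) 0) ∂μQ|
        ≤ ∫ q, |max (x - q) 0 - max (y - q) 0| ∂μQ := by
          simpa [Real.norm_eq_abs] using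
            norm_integral_le_integral_norm (μ := μQ)
              (f := fun q => max (x - q) 0 - max (y - q) 0)
      _ ≤ ∫ _q, |x - y| ∂μQ := by
          refine integral_mono ((aux_int μQ hQ1a x).sub (aux_int μQ hQ1a y)).abs
            (integrable_const _) fun q => ?_
          have := abs_max_sub_max_le_abs (x - q) (y - q) 0
          simpa using this
      _ = |x - y| := by simp
  exact hlip.continuous

lemma cont_gain (P : A → Finset A → ℝ) (μQ : Measure ℝ) [IsProbabilityMeasure μQ]
    (hQ1a : ∀ q : ℝ, q < 0 → Qfun μQ q = 0) (c : A) :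
    Continuous fun π : A → ℝ => gain P μQ π c := by
  refine continuous_finset_sum _ fun A' _ => ?_
  exact continuous_const.mul
    ((cont_v μQ hQ1a).comp ((cont_piStar A').sub (continuous_apply c)))

lemma cont_gainMin (P : A → Finset A → ℝ) (μQ : Measure ℝ) [IsProbabilityMeasure μQ]
    (hQ1a : ∀ q : ℝ, q < 0 → Qfun μQ q = 0) (A' : Finset A) :
    Continuous fun π : A → ℝ => gainMin P μQ π A' := by
  rcases A'.eq_empty_or_nonempty with rfl | hA'
  · simp only [gainMin, dif_neg (Finset.not_nonempty_empty)]
    exact continuous_const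
  · have heq : (fun π : A → ℝ => gainMin P μQ π A')
        = A'.inf' hA' (fun b => fun π : A → ℝ => gain P μQ π b) := by
      funext π
      rw [gainMin, dif_pos hA', Finset.inf'_apply]
    rw [heq]
    exact Continuous.finset_inf' hA' fun b _ => cont_gain P μQ hQ1a b

lemma usc_Qfun (μQ : Measure ℝ) [IsProbabilityMeasure μQ] :
    UpperSemicontinuous (Qfun μQ) := by
  have hmono : Monotone (Qfun μQ) := fun u v huv =>
    ENNReal.toReal_mono (measure_ne_top _ _) (measure_mono (Set.Iic_subset_Iic.2 huv))
  have hQcdf : Qfun μQ = fun x => ProbabilityTheory.cdf μQ x := by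
    funext x
    rw [ProbabilityTheory.cdf_eq_real, Qfun, measureReal_def]
  intro q₀ y hy
  have hrc : ContinuousWithinAt (Qfun μQ) (Set.Ici q₀) q₀ := by
    rw [hQcdf]
    exact (ProbabilityTheory.cdf μQ).right_continuous q₀
  have hev : ∀ᶠ x in nhdsWithin q₀ (Set.Ici q₀), Qfun μQ x < y :=
    hrc.eventually_lt_const hy
  rw [eventually_nhdsWithin_iff] at hev
  filter_upwards [hev] with x hx
  rcases le_or_gt q₀ x with h | h
  · exact hx h
  · exact lt_of_le_of_lt (hmono h.le) hy

/-- The key lower-semicontinuity lemma for products `c * Φ * w`. -/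
lemma lsc_mul {X : Type*} [TopologicalSpace X] (c : ℝ) (Φ w : X → ℝ)
    (hc : 0 ≤ c) (hΦ : UpperSemicontinuous Φ) (hΦ0 : ∀ x, 0 ≤ Φ x) (hΦ1 : ∀ x, Φ x ≤ 1)
    (hw : Continuous w) (himp : ∀ x, 0 < w x → Φ x = 0) :
    LowerSemicontinuous (fun x => c * Φ x * w x) := by
  intro x₀ y hy
  change y < c * Φ x₀ * w x₀ at hy
  rcases lt_trichotomy (w x₀) 0 with hneg | hzero | hpos
  · -- w x₀ < 0
    have hf0 : c * Φ x₀ * w x₀ ≤ 0 :=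
      mul_nonpos_of_nonneg_of_nonpos (mul_nonneg hc (hΦ0 x₀)) hneg.le
    have hy0 : y < 0 := lt_of_lt_of_le hy hf0
    -- pick ε > 0 with y < c * (Φ x₀ + ε) * (w x₀ - ε)
    have htend : Filter.Tendsto (fun ε : ℝ => c * (Φ x₀ + ε) * (w x₀ - ε)) (nhds 0)
        (nhds (c * (Φ x₀ + 0) * (w x₀ - 0))) := by
      refine Filter.Tendsto.mul (Filter.Tendsto.mul tendsto_const_nhds ?_) ?_
      · exact (continuous_const.add continuous_id).tendsto 0
      · exact (continuous_const.sub continuous_id).tendsto 0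
    have hy' : y < c * (Φ x₀ + 0) * (w x₀ - 0) := by simpa using hy
    have h1 : ∀ᶠ ε in nhdsWithin (0:ℝ) (Set.Ioi 0),
        y < c * (Φ x₀ + ε) * (w x₀ - ε) :=
      eventually_nhdsWithin_of_eventually_nhds (htend.eventually (eventually_gt_nhds hy'))
    obtain ⟨ε, hyε, hε⟩ := (h1.and eventually_mem_nhdsWithin).exists
    rw [Set.mem_Ioi] at hε
    have hΦev : ∀ᶠ x in nhds x₀, Φ x < Φ x₀ + ε :=
      hΦ x₀ (Φ x₀ + ε) (lt_add_of_pos_right _ hε)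
    have hwev : ∀ᶠ x in nhds x₀, w x₀ - ε < w x :=
      (hw.tendsto x₀).eventually (eventually_gt_nhds (by linarith))
    filter_upwards [hΦev, hwev] with x h1x h2x
    rcases le_or_gt 0 (w x) with h | h
    · exact lt_of_lt_of_le hy0 (mul_nonneg (mul_nonneg hc (hΦ0 x)) h)
    · have k1 : c * (Φ x₀ + ε) * (w x₀ - ε) ≤ c * (Φ x₀ + ε) * w x :=
        mul_le_mul_of_nonneg_left h2x.le (mul_nonneg hc (by linarith [hΦ0 x₀]))
      have k2 : c * (Φ x₀ + ε) * w x ≤ c * Φ x * w x := by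
        have hm : c * w x ≤ 0 := mul_nonpos_of_nonneg_of_nonpos hc h.le
        have := mul_le_mul_of_nonpos_left h1x.le hm
        calc c * (Φ x₀ + ε) * w x = (c * w x) * (Φ x₀ + ε) := by ring
          _ ≤ (c * w x) * Φ x := this
          _ = c * Φ x * w x := by ring
      linarith
  · -- w x₀ = 0
    have hy0 : y < 0 := by
      have h0 : c * Φ x₀ * w x₀ = 0 := by rw [hzero, mul_zero]
      rw [h0] at hy
      exact hy
    have hwev : ∀ᶠ x in nhds x₀, y < c * w x := by
      have htend : Filter.Tendsto (fun x => c * w x) (nhds x₀) (nhds (c * w x₀)) :=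
        (continuous_const.mul hw).tendsto x₀
      refine htend.eventually (eventually_gt_nhds ?_)
      rw [hzero, mul_zero]
      exact hy0
    filter_upwards [hwev] with x hx
    rcases le_or_gt 0 (w x) with h | h
    · exact lt_of_lt_of_le hy0 (mul_nonneg (mul_nonneg hc (hΦ0 x)) h)
    · have hm : c * w x ≤ 0 := mul_nonpos_of_nonneg_of_nonpos hc h.le
      have h2 : (c * w x) * 1 ≤ (c * w x) * Φ x := mul_le_mul_of_nonpos_left (hΦ1 x) hm
      calc y < c * w x := hx
        _ = (c * w x) * 1 := (mul_one _).symm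
        _ ≤ (c * w x) * Φ x := h2
        _ = c * Φ x * w x := by ring
  · -- w x₀ > 0
    have hy0 : y < 0 := by
      have h0 : c * Φ x₀ * w x₀ = 0 := by rw [himp x₀ hpos, mul_zero, zero_mul]
      rw [h0] at hy
      exact hy
    have hwev : ∀ᶠ x in nhds x₀, 0 < w x :=
      (hw.tendsto x₀).eventually (eventually_gt_nhds hpos)
    filter_upwards [hwev] with x hx
    exact lt_of_lt_of_le hy0 (mul_nonneg (mul_nonneg hc (hΦ0 x)) hx.le)

end Aux

theorem stmt4 {A : Type*} [Fintype A] [DecidableEq A] [Nonempty A]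
    (P : A → Finset A → ℝ) (μQ : Measure ℝ) [IsProbabilityMeasure μQ]
    (hPnn : ∀ a A', 0 ≤ P a A')
    (hPsupp : ∀ a A', ¬ A' ⊆ Finset.univ.erase a → P a A' = 0)
    (hPempty : ∀ a, P a (∅ : Finset A) = 0)
    (hPsum : ∀ a, ∑ A' ∈ (Finset.univ.erase a).powerset, P a A' = 1)
    -- Assumption Q1
    (hQ1a : ∀ q : ℝ, q < 0 → Qfun μQ q = 0)
    (hQ1b : ∀ q : ℝ, 0 < q → 0 < Qfun μQ q)
    -- Assumption A1-i
    (hA1i : ∀ a b : A, b ≠ a →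
      0 < ∑ A' ∈ (Finset.univ.erase a).powerset.filter (fun A' => b ∈ A'), P a A')
    -- Assumption A1-ii
    (hA1ii : ∀ a b : A, ∀ S : Finset A, S ⊆ Finset.univ \ {a, b} →
      ∑ A' ∈ (Finset.univ.erase a).powerset.filter (fun A' => (A' ∩ S).Nonempty), P a A'
        = ∑ A' ∈ (Finset.univ.erase b).powerset.filter (fun A' => (A' ∩ S).Nonempty), P b A')
    (a : A) :
    LowerSemicontinuous (fun π : A → ℝ => gain2 P μQ π a) ∧
      (∀ π : A → ℝ, gain2 P μQ π a ≤ 0) ∧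
      (∀ π : A → ℝ,
        (gain2 P μQ π a = 0 ↔ π a = Finset.univ.sup' Finset.univ_nonempty π)) := by
  classical
  -- part (b): each term nonpositive
  have hb : ∀ π : A → ℝ, gain2 P μQ π a ≤ 0 := by
    intro π
    exact Finset.sum_nonpos fun A' _ =>
      term_nonpos P μQ hPnn hPempty hQ1a hA1ii π a A'
  -- part (c) backward
  have hcback : ∀ π : A → ℝ, π a = Finset.univ.sup' Finset.univ_nonempty π →
      gain2 P μQ π a = 0 := by
    intro π hmaxa
    have hmax : ∀ c : A, π c ≤ π a := by
      intro c
      rw [hmaxa]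
      exact Finset.le_sup' π (mem_univ c)
    refine Finset.sum_eq_zero fun A' _ => ?_
    rcases A'.eq_empty_or_nonempty with rfl | hA'
    · simp [hPempty]
    · rcases lt_or_ge (piStar π A') (π a) with h | h
      · rw [hQ1a _ (by linarith), mul_zero, zero_mul]
      · obtain ⟨cc, hcc, hccs⟩ := Finset.exists_mem_eq_sup' hA' π
        have hps : piStar π A' = A'.sup' hA' π := by rw [piStar, dif_pos hA']
        have hcca : π a ≤ π cc := by rw [hps, hccs] at h; exact h
        have hgcc : gain P μQ π cc = 0 :=
          gain_eq_zero P μQ hPempty hQ1a π cc fun d => le_trans (hmax d) hcca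
        have hga : gain P μQ π a = 0 :=
          gain_eq_zero P μQ hPempty hQ1a π a hmax
        have hgm : gainMin P μQ π A' = 0 := by
          refine le_antisymm ?_ ?_
          · rw [gainMin, dif_pos hA', ← hgcc]
            exact Finset.inf'_le _ hcc
          · rw [gainMin, dif_pos hA']
            exact Finset.le_inf' hA' _ fun d _ => gain_nonneg P μQ hPnn π d
        rw [hgm, hga, sub_zero, mul_zero]
  -- part (c) forward
  have hcfor : ∀ π : A → ℝ, π a ≠ Finset.univ.sup' Finset.univ_nonempty π →
      gain2 P μQ π a < 0 := by
    intro π hne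
    have hle : π a ≤ Finset.univ.sup' Finset.univ_nonempty π :=
      Finset.le_sup' π (mem_univ a)
    have hltM : π a < Finset.univ.sup' Finset.univ_nonempty π := lt_of_le_of_ne hle hne
    obtain ⟨b, _, hbs⟩ := Finset.exists_mem_eq_sup' Finset.univ_nonempty π
    have hab : π a < π b := by rw [← hbs]; exact hltM
    have hbmax : ∀ c : A, π c ≤ π b := by
      intro c
      rw [← hbs]
      exact Finset.le_sup' π (mem_univ c)
    have hba : b ≠ a := fun h => absurd hab (by rw [h]; exact lt_irrefl _)
    obtain ⟨A₀, hA₀mem, hA₀pos⟩ : ∃ A₀ ∈ (Finset.univ.erase a).powerset.filter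
        (fun A' => b ∈ A'), 0 < P a A₀ := by
      by_contra h
      push_neg at h
      have : (∑ A' ∈ (Finset.univ.erase a).powerset.filter (fun A' => b ∈ A'), P a A') ≤ 0 :=
        Finset.sum_nonpos fun A' hA' => h A' hA'
      linarith [hA1i a b hba]
    rw [mem_filter] at hA₀mem
    have hbA₀ : b ∈ A₀ := hA₀mem.2
    have hA₀ne : A₀.Nonempty := ⟨b, hbA₀⟩
    have hps : π a < piStar π A₀ := by
      rw [piStar, dif_pos hA₀ne]
      exact lt_of_lt_of_le hab (Finset.le_sup' π hbA₀)
    have hQpos : 0 < Qfun μQ (piStar π A₀ - π a) := hQ1b _ (by linarith)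
    have hgb : gain P μQ π b = 0 := gain_eq_zero P μQ hPempty hQ1a π b hbmax
    have hgm : gainMin P μQ π A₀ ≤ 0 := by
      rw [gainMin, dif_pos hA₀ne, ← hgb]
      exact Finset.inf'_le _ hbA₀
    have hga : 0 < gain P μQ π a :=
      gain_pos P μQ hPnn hQ1a hQ1b hA1i π a ⟨b, hab⟩
    have hlt0 : P a A₀ * Qfun μQ (piStar π A₀ - π a)
        * (gainMin P μQ π A₀ - gain P μQ π a) < 0 :=
      mul_neg_of_pos_of_neg (mul_pos hA₀pos hQpos) (by linarith)
    have hsum := Finset.sum_lt_sum (s := (Finset.univ.erase a).powerset)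
      (f := fun A' => P a A' * Qfun μQ (piStar π A' - π a)
        * (gainMin P μQ π A' - gain P μQ π a))
      (g := fun _ => (0:ℝ))
      (fun A' _ => term_nonpos P μQ hPnn hPempty hQ1a hA1ii π a A')
      ⟨A₀, hA₀mem.1, hlt0⟩
    simpa [gain2] using hsum
  refine ⟨?_, hb, fun π => ⟨fun h => by_contra fun hne => absurd h (ne_of_lt (hcfor π hne)),
    hcback π⟩⟩
  -- part (a): lower semicontinuity
  have hterm : ∀ A' : Finset A, LowerSemicontinuous fun π : A → ℝ =>
      P a A' * Qfun μQ (piStar π A' - π a) * (gainMin P μQ π A' - gain P μQ π a) := by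
    intro A'
    refine lsc_mul (P a A') (fun π => Qfun μQ (piStar π A' - π a))
      (fun π => gainMin P μQ π A' - gain P μQ π a) (hPnn a A') ?_ ?_ ?_ ?_ ?_
    · intro π₀ y hy
      exact (((cont_piStar A').sub (continuous_apply a)).tendsto π₀).eventually
        (usc_Qfun μQ _ y hy)
    · intro π
      exact ENNReal.toReal_nonneg
    · intro π
      show (μQ (Set.Iic (piStar π A' - π a))).toReal ≤ 1
      calc (μQ (Set.Iic (piStar π A' - π a))).toReal
          ≤ (μQ Set.univ).toReal :=
            ENNReal.toReal_mono (measure_ne_top _ _) (measure_mono (Set.subset_univ _))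
        _ = 1 := by simp
    · exact (cont_gainMin P μQ hQ1a A').sub (cont_gain P μQ hQ1a a)
    · intro π hπ
      change 0 < gainMin P μQ π A' - gain P μQ π a at hπ
      rcases A'.eq_empty_or_nonempty with rfl | hA'
      · exfalso
        rw [gainMin, dif_neg (Finset.not_nonempty_empty), zero_sub] at hπ
        linarith [gain_nonneg P μQ hPnn π a]
      · obtain ⟨cc, hcc, hccs⟩ := Finset.exists_mem_eq_sup' hA' π
        have hlt : π cc < π a := by
          by_contra hge
          push_neg at hge
          have h1 : gain P μQ π cc ≤ gain P μQ π a :=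
            gain_mono P μQ hPnn hPempty hQ1a hA1ii π a cc hge
          have h2 : gainMin P μQ π A' ≤ gain P μQ π cc := by
            rw [gainMin, dif_pos hA']
            exact Finset.inf'_le _ hcc
          linarith
        have : piStar π A' - π a < 0 := by
          rw [piStar, dif_pos hA', hccs]
          linarith
        exact hQ1a _ this
  -- sum of lower semicontinuous functions
  have : ∀ s : Finset (Finset A), LowerSemicontinuous fun π : A → ℝ =>
      ∑ A' ∈ s, P a A' * Qfun μQ (piStar π A' - π a)
        * (gainMin P μQ π A' - gain P μQ π a) := by
    intro s
    induction s using Finset.cons_induction with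
    | empty =>
        simp only [Finset.sum_empty]
        exact lowerSemicontinuous_const
    | cons A' s hA' ih =>
        simpa only [Finset.sum_cons] using (hterm A').add ih
  exact this _
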